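/- Let α ∈ (0,1/2), τ ≥ 1, η = α − α/(2τ), and let w⁺(v) ∈ [0,1], w⁻(v) ∈ [0,τ] with w⁺(v) + w⁻(v) ≥ 1 for v in a finite set R. Define g(t) = ∑_{v∈R}[w⁺(v)·t + w⁻(v)(1−t) − α(w⁺(v)+w⁻(v)) + α/2]. Then g(α) ≥ α|R|/2 and g(1−η) ≥ (1−η−α)∑_{v∈R} w⁺(v). -/

import Mathlib

theorem stmt_6 {V : Type*} (α τ η : ℝ) (R : Finset V) (wp wm : V → ℝ)
    (hα : 0 < α) (hα2 : α < 1 / 2) (hτ : 1 ≤ τ)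
    (hη : η = α - α / (2 * τ))
    (hwp : ∀ v ∈ R, 0 ≤ wp v ∧ wp v ≤ 1)
    (hwm : ∀ v ∈ R, 0 ≤ wm v ∧ wm v ≤ τ)
    (hw : ∀ v ∈ R, wp v + wm v ≥ 1)
    (g : ℝ → ℝ)
    (hg : ∀ t, g t = ∑ v ∈ R, (wp v * t + wm v * (1 - t)
      - α * (wp v + wm v) + α / 2)) :
    g α ≥ α * R.card / 2 ∧ g (1 - η) ≥ (1 - η - α) * ∑ v ∈ R, wp v := by
  have hτ0 : (0:ℝ) < τ := lt_of_lt_of_le one_pos hτ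
  constructor
  · rw [hg]
    have : α * R.card / 2 = ∑ v ∈ R, (α / 2) := by
      rw [Finset.sum_const, nsmul_eq_mul]; ring
    rw [this]
    apply Finset.sum_le_sum
    intro v hv
    have h1 := (hwm v hv).1
    nlinarith [h1]
  · rw [hg, Finset.mul_sum]
    apply Finset.sum_le_sum
    intro v hv
    have h1 := (hwm v hv).2
    have h2 := (hwp v hv).1
    have key : wm v * (η - α) ≥ -(α / 2) := by
      rw [hη]
      have : α - α / (2 * τ) - α = -(α / (2*τ)) := by ring
      rw [this]
      have hle : wm v * (α / (2*τ)) ≤ τ * (α / (2*τ)) :=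
        mul_le_mul_of_nonneg_right h1 (by positivity)
      have : τ * (α / (2*τ)) = α / 2 := by field_simp
      nlinarith
    nlinarith [key]
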